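/- Let 0 ≤ s ≤ 1/2 and define Ψ_s(n₁,n₂,n₃,n₄) = ⟨n₁⟩^{2s} - ⟨n₂⟩^{2s} + ⟨n₃⟩^{2s} - ⟨n₄⟩^{2s} for integers n₁,n₂,n₃,n₄. If n₄ = n₁ - n₂ + n₃, then there is a constant C independent of the nⱼ such that |Ψ_s(n₁,n₂,n₃,n₄)| ≤ C min(⟨n₁-n₂⟩^{2s}, ⟨n₁-n₄⟩^{2s}) ≤ C ⟨n₁-n₂⟩^{s} ⟨n₁-n₄⟩^{s}. -/
import Mathlib


/-- The Japanese bracket `⟨x⟩ = (1+x²)^{1/2}`. -/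
noncomputable def jb (x : ℝ) : ℝ := Real.sqrt (1 + x ^ 2)

/-- The symbol of `2s` symmetrized derivatives
`Ψ_s(n₁,n₂,n₃,n₄) = ⟨n₁⟩^{2s} - ⟨n₂⟩^{2s} + ⟨n₃⟩^{2s} - ⟨n₄⟩^{2s}`. -/
noncomputable def Psi (s : ℝ) (n₁ n₂ n₃ n₄ : ℤ) : ℝ :=
  jb n₁ ^ (2 * s) - jb n₂ ^ (2 * s) + jb n₃ ^ (2 * s) - jb n₄ ^ (2 * s)

lemma jb_nonneg (x : ℝ) : 0 ≤ jb x := Real.sqrt_nonneg _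

lemma one_le_jb (x : ℝ) : 1 ≤ jb x := by
  have := Real.sqrt_le_sqrt (show (1:ℝ) ≤ 1 + x ^ 2 by nlinarith [sq_nonneg x])
  simpa [jb] using this

lemma jb_sq (x : ℝ) : jb x ^ 2 = 1 + x ^ 2 :=
  Real.sq_sqrt (by positivity)

lemma jb_neg (x : ℝ) : jb (-x) = jb x := by simp [jb]

/-- Triangle-type inequality for the Japanese bracket. -/
lemma jb_le_add (a b : ℝ) : jb a ≤ jb b + jb (a - b) := by
  have hu := jb_nonneg b
  have hv := jb_nonneg (a - b)
  have hu2 := jb_sq b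
  have hv2 := jb_sq (a - b)
  have huv : b * (a - b) ≤ jb b * jb (a - b) := by
    nlinarith [sq_nonneg (jb b * jb (a - b) - b * (a - b)),
      sq_nonneg (jb b * jb (a - b) + b * (a - b)), mul_nonneg hu hv]
  have h : 1 + a ^ 2 ≤ (jb b + jb (a - b)) ^ 2 := by nlinarith
  calc jb a = Real.sqrt (1 + a ^ 2) := rfl
    _ ≤ Real.sqrt ((jb b + jb (a - b)) ^ 2) := Real.sqrt_le_sqrt h
    _ = jb b + jb (a - b) := Real.sqrt_sq (by positivity)

/-- Subadditivity of `x ↦ x^t` for `0 ≤ t ≤ 1` on nonnegative reals. -/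
lemma rpow_subadd {x y t : ℝ} (hx : 0 ≤ x) (hy : 0 ≤ y) (ht : 0 ≤ t) (ht1 : t ≤ 1) :
    (x + y) ^ t ≤ x ^ t + y ^ t := by
  have h := NNReal.rpow_add_le_add_rpow x.toNNReal y.toNNReal ht ht1
  have := (NNReal.coe_le_coe).2 h
  simpa [NNReal.coe_rpow, Real.coe_toNNReal x hx, Real.coe_toNNReal y hy] using this

/-- The key inequality `|⟨a⟩^t − ⟨b⟩^t| ≤ ⟨a−b⟩^t` for `0 ≤ t ≤ 1`. -/
lemma jb_rpow_sub_le {t : ℝ} (ht : 0 ≤ t) (ht1 : t ≤ 1) (a b : ℝ) :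
    |jb a ^ t - jb b ^ t| ≤ jb (a - b) ^ t := by
  have key : ∀ u v : ℝ, jb u ^ t - jb v ^ t ≤ jb (u - v) ^ t := by
    intro u v
    have h1 : jb u ^ t ≤ (jb v + jb (u - v)) ^ t :=
      Real.rpow_le_rpow (jb_nonneg u) (jb_le_add u v) ht
    have h2 : (jb v + jb (u - v)) ^ t ≤ jb v ^ t + jb (u - v) ^ t :=
      rpow_subadd (jb_nonneg v) (jb_nonneg (u - v)) ht ht1
    linarith
  rw [abs_sub_le_iff]
  constructor
  · exact key a b
  · have := key b a
    rwa [show b - a = -(a - b) by ring, jb_neg] at this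

/-- For `0 ≤ s ≤ 1/2` and integers with `n₄ = n₁ - n₂ + n₃`, there is `C` independent of the `nⱼ`
with `|Ψ_s(n̄)| ≤ C min(⟨n₁-n₂⟩^{2s}, ⟨n₁-n₄⟩^{2s}) ≤ C ⟨n₁-n₂⟩^s ⟨n₁-n₄⟩^s`. -/
theorem psi_bound (s : ℝ) (hs0 : 0 ≤ s) (hs : s ≤ 1/2) :
    ∃ C > 0, ∀ n₁ n₂ n₃ n₄ : ℤ, n₄ = n₁ - n₂ + n₃ →
      |Psi s n₁ n₂ n₃ n₄| ≤
        C * min (jb ((n₁ - n₂ : ℤ)) ^ (2 * s)) (jb ((n₁ - n₄ : ℤ)) ^ (2 * s)) ∧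
      C * min (jb ((n₁ - n₂ : ℤ)) ^ (2 * s)) (jb ((n₁ - n₄ : ℤ)) ^ (2 * s)) ≤
        C * (jb ((n₁ - n₂ : ℤ)) ^ s * jb ((n₁ - n₄ : ℤ)) ^ s) := by
  refine ⟨2, by norm_num, fun n₁ n₂ n₃ n₄ h => ?_⟩
  have ht : 0 ≤ 2 * s := by linarith
  have ht1 : 2 * s ≤ 1 := by linarith
  set a := ((n₁ : ℝ) - n₂) with ha
  set b := ((n₁ : ℝ) - n₄) with hb
  have hca : ((n₁ - n₂ : ℤ) : ℝ) = a := by push_cast; ring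
  have hcb : ((n₁ - n₄ : ℤ) : ℝ) = b := by push_cast; ring
  have h34 : ((n₃ : ℝ)) - n₄ = -a := by
    have : (n₄ : ℝ) = n₁ - n₂ + n₃ := by exact_mod_cast congrArg (Int.cast : ℤ → ℝ) h
    rw [ha]; linarith
  have h32 : ((n₃ : ℝ)) - n₂ = -b := by
    have : (n₄ : ℝ) = n₁ - n₂ + n₃ := by exact_mod_cast congrArg (Int.cast : ℤ → ℝ) h
    rw [hb]; linarith
  -- two bounds on |Psi|
  have bound1 : |Psi s n₁ n₂ n₃ n₄| ≤ 2 * jb a ^ (2 * s) := by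
    have e1 := jb_rpow_sub_le ht ht1 (n₁ : ℝ) (n₂ : ℝ)
    have e2 := jb_rpow_sub_le ht ht1 (n₃ : ℝ) (n₄ : ℝ)
    rw [show ((n₁ : ℝ)) - n₂ = a from rfl] at e1
    rw [h34, jb_neg] at e2
    have : |Psi s n₁ n₂ n₃ n₄| ≤ |jb (n₁:ℝ) ^ (2*s) - jb (n₂:ℝ) ^ (2*s)| +
        |jb (n₃:ℝ) ^ (2*s) - jb (n₄:ℝ) ^ (2*s)| := by
      rw [Psi]; exact (abs_add_le _ _).trans_eq' (by ring_nf)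
    linarith
  have bound2 : |Psi s n₁ n₂ n₃ n₄| ≤ 2 * jb b ^ (2 * s) := by
    have e1 := jb_rpow_sub_le ht ht1 (n₁ : ℝ) (n₄ : ℝ)
    have e2 := jb_rpow_sub_le ht ht1 (n₃ : ℝ) (n₂ : ℝ)
    rw [show ((n₁ : ℝ)) - n₄ = b from rfl] at e1
    rw [h32, jb_neg] at e2
    have : |Psi s n₁ n₂ n₃ n₄| ≤ |jb (n₁:ℝ) ^ (2*s) - jb (n₄:ℝ) ^ (2*s)| +
        |jb (n₃:ℝ) ^ (2*s) - jb (n₂:ℝ) ^ (2*s)| := by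
      rw [Psi]; exact (abs_add_le _ _).trans_eq' (by ring_nf)
    linarith
  rw [hca, hcb]
  constructor
  · rcases le_total (jb a ^ (2*s)) (jb b ^ (2*s)) with hm | hm
    · rw [min_eq_left hm]; exact bound1
    · rw [min_eq_right hm]; exact bound2
  · have key : min (jb a ^ (2 * s)) (jb b ^ (2 * s)) ≤ jb a ^ s * jb b ^ s := by
      rcases le_total (jb a) (jb b) with hab | hab
      · calc min (jb a ^ (2*s)) (jb b ^ (2*s)) ≤ jb a ^ (2*s) := min_le_left _ _
          _ = jb a ^ s * jb a ^ s := by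
              rw [← Real.rpow_add (lt_of_lt_of_le one_pos (one_le_jb a))]; ring_nf
          _ ≤ jb a ^ s * jb b ^ s :=
              mul_le_mul_of_nonneg_left (Real.rpow_le_rpow (jb_nonneg a) hab hs0)
                (Real.rpow_nonneg (jb_nonneg a) s)
      · calc min (jb a ^ (2*s)) (jb b ^ (2*s)) ≤ jb b ^ (2*s) := min_le_right _ _
          _ = jb b ^ s * jb b ^ s := by
              rw [← Real.rpow_add (lt_of_lt_of_le one_pos (one_le_jb b))]; ring_nf
          _ ≤ jb a ^ s * jb b ^ s :=
              mul_le_mul_of_nonneg_right (Real.rpow_le_rpow (jb_nonneg b) hab hs0)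
                (Real.rpow_nonneg (jb_nonneg b) s)
    nlinarith [key]
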